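/- Let (a, b, c, d, e) ∈ ℝ⁵ and suppose the zero set Z := {(x, y) ∈ ℝ² : a·x² + b·y² + c·x·y + d·x + e·y + 1 = 0} equals an ellipse {p ∈ ℝ² : dist(p, f₁) + dist(p, f₂) = s} for some f₁, f₂ ∈ ℝ² and some real s > dist(f₁, f₂) with s > 0. If e² − 4b − d² + 4a = 0 and d·e − 2c = 0, then f₁ = 0 or f₂ = 0; that is, the origin is one of the foci of the ellipse. -/

import Mathlib

noncomputable def mk2 (x y : ℝ) : EuclideanSpace ℝ (Fin 2) := WithLp.toLp 2 ![x, y]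

@[simp] lemma mk2_zero (x y : ℝ) : mk2 x y 0 = x := rfl
@[simp] lemma mk2_one (x y : ℝ) : mk2 x y 1 = y := rfl

lemma sq_add_sq_eq_zero' {x y : ℝ} (h : x^2 + y^2 = 0) : x = 0 ∧ y = 0 := by
  constructor <;> nlinarith [sq_nonneg x, sq_nonneg y]

lemma dist_eq_two (x y : EuclideanSpace ℝ (Fin 2)) :
    dist x y = Real.sqrt ((x 0 - y 0)^2 + (x 1 - y 1)^2) := by
  rw [EuclideanSpace.dist_eq]
  simp [Fin.sum_univ_two, Real.dist_eq, sq_abs]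

set_option maxHeartbeats 4000000 in
/-- Converse direction of the focal condition: if the zero set of a normalized
conic is an ellipse and the two focal polynomials vanish, then the origin is one
of the foci. -/
theorem origin_focus_of_focal_condition (a b c d e : ℝ)
    (f₁ f₂ : EuclideanSpace ℝ (Fin 2)) (s : ℝ) (hs : s > dist f₁ f₂) (hs0 : s > 0)
    (hZ : {p : EuclideanSpace ℝ (Fin 2) |
        a * (p 0) ^ 2 + b * (p 1) ^ 2 + c * (p 0) * (p 1) + d * (p 0) + e * (p 1) + 1 = 0}
      = {p : EuclideanSpace ℝ (Fin 2) | dist p f₁ + dist p f₂ = s})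
    (h1 : e ^ 2 - 4 * b - d ^ 2 + 4 * a = 0) (h2 : d * e - 2 * c = 0) :
    f₁ = 0 ∨ f₂ = 0 := by
  -- set up the geometric frame: midpoint m, unit direction u, focal half-distance C
  obtain ⟨C, u1, u2, hC0, hCd, hu, h10, h11, h20, h21⟩ :
      ∃ C u1 u2 : ℝ, (0:ℝ) ≤ C ∧ 2*C = dist f₁ f₂ ∧ u1^2 + u2^2 = 1 ∧
        f₁ 0 = (f₁ 0 + f₂ 0)/2 - C*u1 ∧ f₁ 1 = (f₁ 1 + f₂ 1)/2 - C*u2 ∧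
        f₂ 0 = (f₁ 0 + f₂ 0)/2 + C*u1 ∧ f₂ 1 = (f₁ 1 + f₂ 1)/2 + C*u2 := by
    by_cases hd : dist f₁ f₂ = 0
    · have hf : f₁ = f₂ := by rwa [dist_eq_zero] at hd
      exact ⟨0, 1, 0, le_refl 0, by simp [hd], by norm_num,
        by rw [hf]; ring, by rw [hf]; ring, by rw [hf]; ring, by rw [hf]; ring⟩
    · have hdpos : 0 < dist f₁ f₂ := lt_of_le_of_ne dist_nonneg (Ne.symm hd)
      have hD2 : dist f₁ f₂ ^ 2 = (f₁ 0 - f₂ 0)^2 + (f₁ 1 - f₂ 1)^2 := by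
        rw [dist_eq_two]
        exact Real.sq_sqrt (by positivity)
      refine ⟨dist f₁ f₂ / 2, (f₂ 0 - f₁ 0)/dist f₁ f₂, (f₂ 1 - f₁ 1)/dist f₁ f₂,
        by positivity, by ring, ?_, by field_simp; ring, by field_simp; ring,
        by field_simp; ring, by field_simp; ring⟩
      have hsum : (f₂ 0 - f₁ 0)^2 + (f₂ 1 - f₁ 1)^2 = dist f₁ f₂ ^ 2 := by
        linear_combination -hD2
      rw [div_pow, div_pow, ← add_div, hsum]
      exact div_self (pow_ne_zero 2 hd)
  obtain ⟨m1, hm1⟩ : ∃ x : ℝ, x = (f₁ 0 + f₂ 0)/2 := ⟨_, rfl⟩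
  obtain ⟨m2, hm2⟩ : ∃ x : ℝ, x = (f₁ 1 + f₂ 1)/2 := ⟨_, rfl⟩
  rw [← hm1] at h10 h20
  rw [← hm2] at h11 h21
  obtain ⟨A, hA⟩ : ∃ x : ℝ, x = s/2 := ⟨_, rfl⟩
  have hA0 : 0 < A := by rw [hA]; linarith
  have hCA : C < A := by
    rw [hA]; linarith [hCd.symm ▸ hs]
  obtain ⟨B, hB⟩ : ∃ x : ℝ, x = Real.sqrt (A^2 - C^2) := ⟨_, rfl⟩
  have hB2 : B^2 = A^2 - C^2 := by
    rw [hB]; exact Real.sq_sqrt (by nlinarith)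
  have hB0 : 0 < B := by
    rw [hB]; exact Real.sqrt_pos.mpr (by nlinarith)
  obtain ⟨r2, hr2e⟩ : ∃ x : ℝ, x = Real.sqrt 2 := ⟨_, rfl⟩
  have hr2 : r2^2 = 2 := by rw [hr2e]; exact Real.sq_sqrt (by norm_num)
  have hr20 : 0 < r2 := by rw [hr2e]; positivity
  -- every point of the parametrized ellipse satisfies the conic equation
  have hOn : ∀ X Y : ℝ, A^2*(X^2 + Y^2) + C^2*(A^2 - X^2) = A^4 → X^2 ≤ A^2 →
      a * (m1 + X*u1 - Y*u2) ^ 2 + b * (m2 + X*u2 + Y*u1) ^ 2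
        + c * (m1 + X*u1 - Y*u2) * (m2 + X*u2 + Y*u1)
        + d * (m1 + X*u1 - Y*u2) + e * (m2 + X*u2 + Y*u1) + 1 = 0 := by
    intro X Y hXY hX2
    have hXA : |X| ≤ A := by
      rw [← Real.sqrt_sq hA0.le, ← Real.sqrt_sq_eq_abs]
      exact Real.sqrt_le_sqrt hX2
    obtain ⟨hXA1, hXA2⟩ := abs_le.mp hXA
    have hp1 : dist (mk2 (m1 + X*u1 - Y*u2) (m2 + X*u2 + Y*u1)) f₁ = (A^2 + C*X)/A := by
      rw [dist_eq_two, mk2_zero, mk2_one, h10, h11]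
      rw [show (m1 + X*u1 - Y*u2 - (m1 - C*u1))^2 + (m2 + X*u2 + Y*u1 - (m2 - C*u2))^2
          = ((A^2 + C*X)/A)^2 from by
        rw [div_pow, eq_div_iff (by positivity)]
        linear_combination (A^2*((X+C)^2 + Y^2))*hu + hXY]
      refine Real.sqrt_sq ?_
      have hnum : 0 ≤ A^2 + C*X := by nlinarith [mul_nonneg hC0 (by linarith : (0:ℝ) ≤ A + X)]
      positivity
    have hp2 : dist (mk2 (m1 + X*u1 - Y*u2) (m2 + X*u2 + Y*u1)) f₂ = (A^2 - C*X)/A := by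
      rw [dist_eq_two, mk2_zero, mk2_one, h20, h21]
      rw [show (m1 + X*u1 - Y*u2 - (m1 + C*u1))^2 + (m2 + X*u2 + Y*u1 - (m2 + C*u2))^2
          = ((A^2 - C*X)/A)^2 from by
        rw [div_pow, eq_div_iff (by positivity)]
        linear_combination (A^2*((X-C)^2 + Y^2))*hu + hXY]
      refine Real.sqrt_sq ?_
      have hnum : 0 ≤ A^2 - C*X := by nlinarith [mul_nonneg hC0 (by linarith : (0:ℝ) ≤ A - X)]
      positivity
    have hmem : (mk2 (m1 + X*u1 - Y*u2) (m2 + X*u2 + Y*u1)) ∈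
        {p : EuclideanSpace ℝ (Fin 2) | dist p f₁ + dist p f₂ = s} := by
      simp only [Set.mem_setOf_eq, hp1, hp2]
      rw [← add_div]
      rw [show A^2 + C*X + (A^2 - C*X) = 2*A^2 by ring, hA]
      field_simp
    have := (Set.ext_iff.mp hZ (mk2 (m1 + X*u1 - Y*u2) (m2 + X*u2 + Y*u1))).mpr hmem
    simpa only [Set.mem_setOf_eq, mk2_zero, mk2_one] using this
  -- the five sample points
  have E1 := hOn A 0 (by ring) (le_refl _)
  have E2 := hOn (-A) 0 (by ring) (le_of_eq (by ring))
  have E3 := hOn 0 B (by linear_combination A^2*hB2) (by simpa using sq_nonneg A)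
  have E4 := hOn 0 (-B) (by linear_combination A^2*hB2) (by simpa using sq_nonneg A)
  have E5 := hOn (A*r2/2) (B*r2/2)
    (by linear_combination (A^2*(A^2+B^2)/4 - C^2*A^2/4)*hr2 + (A^2/2)*hB2)
    (by nlinarith [sq_nonneg A])

  -- ### stage 1: linear consequences of the five point evaluations
  have F1 : (2*a*m1 + c*m2 + d)*u1 + (2*b*m2 + c*m1 + e)*u2 = 0 := by
    have h' : 2*A*((2*a*m1 + c*m2 + d)*u1 + (2*b*m2 + c*m1 + e)*u2) = 0 := by linear_combination E1 - E2
    rcases mul_eq_zero.mp h' with h'' | h''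
    · exact absurd h'' (by positivity)
    · exact h''
  have F2 : (2*b*m2 + c*m1 + e)*u1 - (2*a*m1 + c*m2 + d)*u2 = 0 := by
    have h' : 2*B*((2*b*m2 + c*m1 + e)*u1 - (2*a*m1 + c*m2 + d)*u2) = 0 := by linear_combination E3 - E4
    rcases mul_eq_zero.mp h' with h'' | h''
    · exact absurd h'' (by positivity)
    · exact h''
  have hg1 : (2*a*m1 + c*m2 + d) = 0 := by linear_combination u1*F1 - u2*F2 - (2*a*m1 + c*m2 + d)*hu
  have hg2 : (2*b*m2 + c*m1 + e) = 0 := by linear_combination u2*F1 + u1*F2 - (2*b*m2 + c*m1 + e)*hu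
  have hQu : (a*m1^2 + b*m2^2 + c*m1*m2 + d*m1 + e*m2 + 1) + A^2*(a*u1^2 + b*u2^2 + c*u1*u2) = 0 := by linear_combination (1/2)*E1 + (1/2)*E2
  have hQv : (a*m1^2 + b*m2^2 + c*m1*m2 + d*m1 + e*m2 + 1) + B^2*(a*u2^2 + b*u1^2 - c*u1*u2) = 0 := by linear_combination (1/2)*E3 + (1/2)*E4
  have hbil : (2*(b-a)*u1*u2 + c*(u1^2 - u2^2)) = 0 := by
    have h' : A*B*(2*(b-a)*u1*u2 + c*(u1^2 - u2^2)) = 0 := by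
      linear_combination 2*E5 - (r2*A)*F1 - (r2*B)*F2 - hQu - hQv
        - ((A^2*(a*u1^2 + b*u2^2 + c*u1*u2) + B^2*(a*u2^2 + b*u1^2 - c*u1*u2) + A*B*(2*(b-a)*u1*u2 + c*(u1^2 - u2^2)))/2)*hr2
    rcases mul_eq_zero.mp h' with h'' | h''
    · exact absurd h'' (by positivity)
    · exact h''
  have hd2 : d = (-2*((a*u1^2 + b*u2^2 + c*u1*u2)*(m1*u1 + m2*u2)*u1 - (a*u2^2 + b*u1^2 - c*u1*u2)*(m2*u1 - m1*u2)*u2)) := by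
    linear_combination hg1 + ((2*a*m1 + c*m2)*((u1^2 + u2^2)+1))*hu - ((m2*u1 - m1*u2)*u1 - (m1*u1 + m2*u2)*u2)*hbil
  have he2 : e = (-2*((a*u1^2 + b*u2^2 + c*u1*u2)*(m1*u1 + m2*u2)*u2 + (a*u2^2 + b*u1^2 - c*u1*u2)*(m2*u1 - m1*u2)*u1)) := by
    linear_combination hg2 + ((2*b*m2 + c*m1)*((u1^2 + u2^2)+1))*hu - ((m2*u1 - m1*u2)*u2 + (m1*u1 + m2*u2)*u1)*hbil
  -- ### stage 2: main focal identities
  have hX : (a*u1^2 + b*u2^2 + c*u1*u2)^2*(m1*u1 + m2*u2)^2 - (a*u2^2 + b*u1^2 - c*u1*u2)^2*(m2*u1 - m1*u2)^2 = (a*u1^2 + b*u2^2 + c*u1*u2) - (a*u2^2 + b*u1^2 - c*u1*u2) := by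
    linear_combination ((2*u1*u2)/2)*h2 + (-((2*u1*u2)/2)*e - ((u1^2 - u2^2)/4)*(d + (-2*((a*u1^2 + b*u2^2 + c*u1*u2)*(m1*u1 + m2*u2)*u1 - (a*u2^2 + b*u1^2 - c*u1*u2)*(m2*u1 - m1*u2)*u2))))*hd2
      + (-((2*u1*u2)/2)*(-2*((a*u1^2 + b*u2^2 + c*u1*u2)*(m1*u1 + m2*u2)*u1 - (a*u2^2 + b*u1^2 - c*u1*u2)*(m2*u1 - m1*u2)*u2)) + ((u1^2 - u2^2)/4)*(e + (-2*((a*u1^2 + b*u2^2 + c*u1*u2)*(m1*u1 + m2*u2)*u2 + (a*u2^2 + b*u1^2 - c*u1*u2)*(m2*u1 - m1*u2)*u1))))*he2 - ((u1^2 - u2^2)/4)*h1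
      - (((u1^2 + u2^2)+1)*((a*u1^2 + b*u2^2 + c*u1*u2)^2*(m1*u1 + m2*u2)^2 - (a*u2^2 + b*u1^2 - c*u1*u2)^2*(m2*u1 - m1*u2)^2))*hu
  have hY : (a*u1^2 + b*u2^2 + c*u1*u2)*(a*u2^2 + b*u1^2 - c*u1*u2)*(m1*u1 + m2*u2)*(m2*u1 - m1*u2) = 0 := by
    linear_combination ((u1^2 - u2^2)/4)*h2 + (-((u1^2 - u2^2)/4)*e + ((2*u1*u2)/8)*(d + (-2*((a*u1^2 + b*u2^2 + c*u1*u2)*(m1*u1 + m2*u2)*u1 - (a*u2^2 + b*u1^2 - c*u1*u2)*(m2*u1 - m1*u2)*u2))))*hd2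
      + (-((u1^2 - u2^2)/4)*(-2*((a*u1^2 + b*u2^2 + c*u1*u2)*(m1*u1 + m2*u2)*u1 - (a*u2^2 + b*u1^2 - c*u1*u2)*(m2*u1 - m1*u2)*u2)) - ((2*u1*u2)/8)*(e + (-2*((a*u1^2 + b*u2^2 + c*u1*u2)*(m1*u1 + m2*u2)*u2 + (a*u2^2 + b*u1^2 - c*u1*u2)*(m2*u1 - m1*u2)*u1))))*he2 + ((2*u1*u2)/8)*h1
      + (1/2)*hbil - (((u1^2 + u2^2)+1)*((a*u1^2 + b*u2^2 + c*u1*u2)*(a*u2^2 + b*u1^2 - c*u1*u2)*(m1*u1 + m2*u2)*(m2*u1 - m1*u2)))*hu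
  have hDia : (a*u1^2 + b*u2^2 + c*u1*u2)*(m1*u1 + m2*u2)^2 + (a*u2^2 + b*u1^2 - c*u1*u2)*(m2*u1 - m1*u2)^2 = 1 - (a*m1^2 + b*m2^2 + c*m1*m2 + d*m1 + e*m2 + 1) := by
    linear_combination m1*hg1 + m2*hg2 - ((m1*u1 + m2*u2)*(m2*u1 - m1*u2))*hbil
      + ((a*m1^2 + b*m2^2 + c*m1*m2)*((u1^2 + u2^2)+1))*hu
  -- ### stage 3: nonvanishing facts
  have hqm_ne : (a*m1^2 + b*m2^2 + c*m1*m2 + d*m1 + e*m2 + 1) ≠ 0 := by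
    intro h0
    have hqu0 : (a*u1^2 + b*u2^2 + c*u1*u2) = 0 := by
      have h' : A^2*(a*u1^2 + b*u2^2 + c*u1*u2) = 0 := by linear_combination hQu - h0
      rcases mul_eq_zero.mp h' with h'' | h''
      · exact absurd h'' (by positivity)
      · exact h''
    have hqv0 : (a*u2^2 + b*u1^2 - c*u1*u2) = 0 := by
      have h' : B^2*(a*u2^2 + b*u1^2 - c*u1*u2) = 0 := by linear_combination hQv - h0
      rcases mul_eq_zero.mp h' with h'' | h''
      · exact absurd h'' (by positivity)
      · exact h''
    have : (0:ℝ) = 1 := by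
      linear_combination hDia - (m1*u1 + m2*u2)^2*hqu0 - (m2*u1 - m1*u2)^2*hqv0 - h0
    norm_num at this
  have hqu_ne : (a*u1^2 + b*u2^2 + c*u1*u2) ≠ 0 := by
    intro h0
    exact hqm_ne (by linear_combination hQu - A^2*h0)
  have hqv_ne : (a*u2^2 + b*u1^2 - c*u1*u2) ≠ 0 := by
    intro h0
    exact hqm_ne (by linear_combination hQv - B^2*h0)
  have halbe : (m1*u1 + m2*u2)*(m2*u1 - m1*u2) = 0 := by
    rcases mul_eq_zero.mp hY with h' | h'
    · rcases mul_eq_zero.mp h' with h'' | h''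
      · rcases mul_eq_zero.mp h'' with h3 | h3
        · exact absurd h3 hqu_ne
        · exact absurd h3 hqv_ne
      · rw [h'', zero_mul]
    · rw [h', mul_zero]
  -- ### stage 4: case analysis
  rcases mul_eq_zero.mp halbe with hcase | hbe0
  · -- α = 0 : degenerate, C = 0 and both foci at the origin
    have hqu_eq : (a*u1^2 + b*u2^2 + c*u1*u2) = (a*u2^2 + b*u1^2 - c*u1*u2)*(a*m1^2 + b*m2^2 + c*m1*m2 + d*m1 + e*m2 + 1) := by
      linear_combination -hX - (a*u2^2 + b*u1^2 - c*u1*u2)*hDia + (((a*u1^2 + b*u2^2 + c*u1*u2)^2 + (a*u1^2 + b*u2^2 + c*u1*u2)*(a*u2^2 + b*u1^2 - c*u1*u2))*(m1*u1 + m2*u2))*hcase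
    have h1A : A^2*(a*u2^2 + b*u1^2 - c*u1*u2) = -1 := by
      have h' : (a*m1^2 + b*m2^2 + c*m1*m2 + d*m1 + e*m2 + 1)*(1 + A^2*(a*u2^2 + b*u1^2 - c*u1*u2)) = 0 := by linear_combination hQu - A^2*hqu_eq
      rcases mul_eq_zero.mp h' with h'' | h''
      · exact absurd h'' hqm_ne
      · linarith
    have hqmA : (a*m1^2 + b*m2^2 + c*m1*m2 + d*m1 + e*m2 + 1)*A^2 = B^2 := by linear_combination A^2*hQv - B^2*h1A
    have hbeC : (m2*u1 - m1*u2)^2 + C^2 = 0 := by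
      linear_combination -(A^2)*hDia + (m2*u1 - m1*u2)^2*h1A + hqmA + hB2 + (A^2*(a*u1^2 + b*u2^2 + c*u1*u2)*(m1*u1 + m2*u2))*hcase
    obtain ⟨hbe0, hC00⟩ := sq_add_sq_eq_zero' hbeC
    left
    have hx : m1 - C*u1 = 0 := by
      linear_combination u1*hcase - u2*hbe0 - m1*hu - u1*hC00
    have hy : m2 - C*u2 = 0 := by
      linear_combination u2*hcase + u1*hbe0 - m2*hu - u2*hC00
    ext i
    fin_cases i
    · simpa [h10] using hx
    · simpa [h11] using hy
  · -- β = 0 : foci on the line through the origin, α = ± C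
    have hqv_eq : (a*u2^2 + b*u1^2 - c*u1*u2) = (a*u1^2 + b*u2^2 + c*u1*u2)*(a*m1^2 + b*m2^2 + c*m1*m2 + d*m1 + e*m2 + 1) := by
      linear_combination hX - (a*u1^2 + b*u2^2 + c*u1*u2)*hDia + (((a*u1^2 + b*u2^2 + c*u1*u2)*(a*u2^2 + b*u1^2 - c*u1*u2) + (a*u2^2 + b*u1^2 - c*u1*u2)^2)*(m2*u1 - m1*u2))*hbe0
    have h1B : B^2*(a*u1^2 + b*u2^2 + c*u1*u2) = -1 := by
      have h' : (a*m1^2 + b*m2^2 + c*m1*m2 + d*m1 + e*m2 + 1)*(1 + B^2*(a*u1^2 + b*u2^2 + c*u1*u2)) = 0 := by linear_combination hQv - B^2*hqv_eq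
      rcases mul_eq_zero.mp h' with h'' | h''
      · exact absurd h'' hqm_ne
      · linarith
    have hqmB : (a*m1^2 + b*m2^2 + c*m1*m2 + d*m1 + e*m2 + 1)*B^2 = A^2 := by linear_combination B^2*hQu - A^2*h1B
    have halC : (m1*u1 + m2*u2)^2 = C^2 := by
      linear_combination -(B^2)*hDia + (m1*u1 + m2*u2)^2*h1B + hqmB - hB2 + (B^2*(a*u2^2 + b*u1^2 - c*u1*u2)*(m2*u1 - m1*u2))*hbe0
    have hfac : ((m1*u1 + m2*u2) - C)*((m1*u1 + m2*u2) + C) = 0 := by linear_combination halC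
    rcases mul_eq_zero.mp hfac with hac | hac
    · left
      have hac' : (m1*u1 + m2*u2) = C := by linarith
      have hx : m1 - C*u1 = 0 := by linear_combination u1*hac' - u2*hbe0 - m1*hu
      have hy : m2 - C*u2 = 0 := by linear_combination u2*hac' + u1*hbe0 - m2*hu
      ext i
      fin_cases i
      · simpa [h10] using hx
      · simpa [h11] using hy
    · right
      have hac' : (m1*u1 + m2*u2) = -C := by linarith
      have hx : m1 + C*u1 = 0 := by linear_combination u1*hac' - u2*hbe0 - m1*hu
      have hy : m2 + C*u2 = 0 := by linear_combination u2*hac' + u1*hbe0 - m2*hu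
      ext i
      fin_cases i
      · simpa [h20] using hx
      · simpa [h21] using hy
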